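/- Assume n ≥ 2 and T ≥ 2, let ε ∈ (0,1), let v_max = max_{1≤i≤n} v_i, and set α = v_max/(1+v_max). If T·α ≥ 12·ln(nT)/ε³ or v_max ≥ 1/ε, then T·α ≥ (1−ε)·OPT^DP({1,…,n}); that is, the static policy that offers only the heaviest product, whose expected maximum load equals T·α, is a (1−ε)-approximation to the optimal dynamic policy. -/

import Mathlib

open Finset

/-- MNL choice probability of product `i` when assortment `S` is offered. -/
noncomputable def phi {n : ℕ} (v : Fin n → ℝ) (S : Finset (Fin n)) (i : Fin n) : ℝ :=
  v i / (1 + ∑ j ∈ S, v j)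

/-- MNL no-purchase probability when assortment `S` is offered. -/
noncomputable def phi0 {n : ℕ} (v : Fin n → ℝ) (S : Finset (Fin n)) : ℝ :=
  1 / (1 + ∑ j ∈ S, v j)

/-- The dynamic-programming value functions `M_t(ℓ)` of the adaptive maximum load
problem over the universe `U`: `M_0(ℓ) = max_i ℓ_i` and
`M_t(ℓ) = max_{S ⊆ U} (φ_0(S)·M_{t-1}(ℓ) + ∑_{i∈S} φ_i(S)·M_{t-1}(ℓ + e_i))`. -/
noncomputable def dpVal {n : ℕ} (v : Fin n → ℝ) (U : Finset (Fin n)) :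
    ℕ → (Fin n → ℕ) → ℝ
  | 0, ℓ => ((Finset.univ.sup ℓ : ℕ) : ℝ)
  | t + 1, ℓ =>
      U.powerset.sup' ⟨∅, Finset.empty_mem_powerset U⟩ fun S =>
        phi0 v S * dpVal v U t ℓ +
          ∑ i ∈ S, phi v S i * dpVal v U t (Function.update ℓ i (ℓ i + 1))

/-- `OPT^DP(U) = M_T(0)`: the optimal expected maximum load achievable by an adaptive
policy offering assortments from the universe `U` to `T` sequentially arriving customers
making independent MNL choices. -/
noncomputable def dpOpt {n : ℕ} (v : Fin n → ℝ) (U : Finset (Fin n)) (T : ℕ) : ℝ :=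
  dpVal v U T fun _ => 0

private lemma vS_pos {n : ℕ} (v : Fin n → ℝ) (hv : ∀ i, 0 < v i) (S : Finset (Fin n)) :
    (0:ℝ) < 1 + ∑ j ∈ S, v j := by
  have : (0:ℝ) ≤ ∑ j ∈ S, v j := Finset.sum_nonneg fun i _ => (hv i).le
  linarith

private lemma phi0_add_sum_phi {n : ℕ} (v : Fin n → ℝ) (hv : ∀ i, 0 < v i)
    (S : Finset (Fin n)) : phi0 v S + ∑ i ∈ S, phi v S i = 1 := by
  have h := vS_pos v hv S
  simp only [phi0, phi, ← Finset.sum_div, ← add_div]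
  exact div_self h.ne'

private lemma phi0_nonneg {n : ℕ} (v : Fin n → ℝ) (hv : ∀ i, 0 < v i)
    (S : Finset (Fin n)) : 0 ≤ phi0 v S :=
  div_nonneg zero_le_one (vS_pos v hv S).le

private lemma phi_nonneg {n : ℕ} (v : Fin n → ℝ) (hv : ∀ i, 0 < v i)
    (S : Finset (Fin n)) (i : Fin n) : 0 ≤ phi v S i :=
  div_nonneg (hv i).le (vS_pos v hv S).le

private lemma dpVal_le_sup_add {n : ℕ} (v : Fin n → ℝ) (hv : ∀ i, 0 < v i) :
    ∀ (t : ℕ) (ℓ : Fin n → ℕ),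
      dpVal v Finset.univ t ℓ ≤ ((Finset.univ.sup ℓ : ℕ) : ℝ) + t := by
  intro t
  induction t with
  | zero => intro ℓ; simp [dpVal]
  | succ t ih =>
    intro ℓ
    rw [dpVal]
    apply Finset.sup'_le
    intro S hS
    set s : ℝ := ((Finset.univ.sup ℓ : ℕ) : ℝ) with hs
    have h1 : dpVal v Finset.univ t ℓ ≤ s + t := ih ℓ
    have h2 : ∀ i ∈ S, dpVal v Finset.univ t (Function.update ℓ i (ℓ i + 1)) ≤ s + 1 + t := by
      intro i _
      refine le_trans (ih _) ?_
      have hsup : Finset.univ.sup (Function.update ℓ i (ℓ i + 1)) ≤ Finset.univ.sup ℓ + 1 := by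
        apply Finset.sup_le
        intro j _
        rcases eq_or_ne j i with rfl | hne
        · rw [Function.update_self]
          exact Nat.add_le_add_right (Finset.le_sup (Finset.mem_univ j)) 1
        · rw [Function.update_of_ne hne]
          exact le_trans (Finset.le_sup (Finset.mem_univ j)) (Nat.le_succ _)
      have := (Nat.cast_le (α := ℝ)).mpr hsup
      push_cast at this
      linarith
    have hb : ∑ i ∈ S, phi v S i * dpVal v Finset.univ t (Function.update ℓ i (ℓ i + 1))
        ≤ (∑ i ∈ S, phi v S i) * (s + 1 + t) := by
      rw [Finset.sum_mul]
      exact Finset.sum_le_sum fun i hi =>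
        mul_le_mul_of_nonneg_left (h2 i hi) (phi_nonneg v hv S i)
    have ha : phi0 v S * dpVal v Finset.univ t ℓ ≤ phi0 v S * (s + t) :=
      mul_le_mul_of_nonneg_left h1 (phi0_nonneg v hv S)
    have hsum := phi0_add_sum_phi v hv S
    have h0 := phi0_nonneg v hv S
    have hφ : 0 ≤ ∑ i ∈ S, phi v S i :=
      Finset.sum_nonneg fun i _ => phi_nonneg v hv S i
    push_cast
    nlinarith [ha, hb, hsum, h0, hφ]

private lemma dpVal_le_potential {n : ℕ} (hn : 0 < n) (v : Fin n → ℝ) (hv : ∀ i, 0 < v i)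
    (lam α : ℝ) (hlam : 0 < lam) (hα0 : 0 ≤ α)
    (hα : ∀ S : Finset (Fin n), ∀ i ∈ S, phi v S i ≤ α) :
    ∀ (t : ℕ) (ℓ : Fin n → ℕ),
      dpVal v Finset.univ t ℓ ≤
        Real.log (∑ j, Real.exp (lam * (ℓ j : ℝ))) / lam
          + t * (α * (Real.exp lam - 1) / lam) := by
  have hne : Nonempty (Fin n) := ⟨⟨0, hn⟩⟩
  have hexp1 : (1:ℝ) ≤ Real.exp lam := by
    have := Real.add_one_le_exp lam; linarith
  have hZpos : ∀ ℓ : Fin n → ℕ, (0:ℝ) < ∑ j, Real.exp (lam * (ℓ j : ℝ)) := fun ℓ =>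
    Finset.sum_pos (fun j _ => Real.exp_pos _) Finset.univ_nonempty
  intro t
  induction t with
  | zero =>
    intro ℓ
    simp only [dpVal, Nat.cast_zero, zero_mul, add_zero]
    rw [le_div_iff₀ hlam, mul_comm, Real.le_log_iff_exp_le (hZpos ℓ)]
    obtain ⟨j, _, hj⟩ := Finset.exists_mem_eq_sup Finset.univ Finset.univ_nonempty ℓ
    rw [hj]
    exact Finset.single_le_sum (f := fun k => Real.exp (lam * (ℓ k : ℝ)))
      (fun k _ => (Real.exp_pos _).le) (Finset.mem_univ j)
  | succ t ih =>
    intro ℓ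
    set Z : ℝ := ∑ j, Real.exp (lam * (ℓ j : ℝ)) with hZdef
    have hZ0 : 0 < Z := hZpos ℓ
    set Φ : ℝ := Real.log Z / lam with hΦ
    set c : ℝ := α * (Real.exp lam - 1) / lam with hc
    rw [dpVal]
    apply Finset.sup'_le
    intro S hS
    have hZi : ∀ i : Fin n,
        (∑ j, Real.exp (lam * ((Function.update ℓ i (ℓ i + 1) j : ℕ) : ℝ)))
          = Z + (Real.exp lam - 1) * Real.exp (lam * (ℓ i : ℝ)) := by
      intro i
      have hfun : (fun j => Real.exp (lam * ((Function.update ℓ i (ℓ i + 1) j : ℕ) : ℝ)))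
          = Function.update (fun j => Real.exp (lam * (ℓ j : ℝ))) i
              (Real.exp (lam * ((ℓ i : ℝ) + 1))) := by
        funext j
        rcases eq_or_ne j i with rfl | h
        · rw [Function.update_self, Function.update_self]; push_cast; ring_nf
        · rw [Function.update_of_ne h, Function.update_of_ne h]
      rw [hfun, Finset.sum_update_of_mem (Finset.mem_univ i),
        Finset.sum_sdiff_eq_sub (Finset.subset_univ {i})]
      have he : Real.exp (lam * ((ℓ i : ℝ) + 1))
          = Real.exp (lam * (ℓ i : ℝ)) * Real.exp lam := by
        rw [← Real.exp_add]; ring_nf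
      rw [he, Finset.sum_singleton]
      ring
    have hkey : ∀ i ∈ S,
        dpVal v Finset.univ t (Function.update ℓ i (ℓ i + 1))
          ≤ Φ + t * c + (Real.exp lam - 1) * Real.exp (lam * (ℓ i : ℝ)) / (lam * Z) := by
      intro i _
      refine le_trans (ih _) ?_
      set D : ℝ := (Real.exp lam - 1) * Real.exp (lam * (ℓ i : ℝ)) with hD
      have hD0 : 0 ≤ D := mul_nonneg (by linarith) (Real.exp_pos _).le
      have hlog : Real.log (Z + D) ≤ Real.log Z + D / Z := by
        have h1 : Real.log ((Z + D) / Z) ≤ (Z + D) / Z - 1 :=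
          Real.log_le_sub_one_of_pos (by positivity)
        rw [Real.log_div (by positivity) hZ0.ne'] at h1
        have h2 : (Z + D) / Z - 1 = D / Z := by field_simp; ring
        linarith
      have hmain : Real.log (Z + D) / lam ≤ Φ + D / (lam * Z) := by
        calc Real.log (Z + D) / lam ≤ (Real.log Z + D / Z) / lam :=
              (div_le_div_iff_of_pos_right hlam).mpr hlog
          _ = Φ + D / (lam * Z) := by rw [hΦ]; field_simp
      rw [hZi i]
      linarith
    have hsumφD : ∑ i ∈ S, phi v S i *
        ((Real.exp lam - 1) * Real.exp (lam * (ℓ i : ℝ)) / (lam * Z)) ≤ c := by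
      have h1 : ∑ i ∈ S, phi v S i * Real.exp (lam * (ℓ i : ℝ)) ≤ α * Z := by
        calc ∑ i ∈ S, phi v S i * Real.exp (lam * (ℓ i : ℝ))
            ≤ ∑ i ∈ S, α * Real.exp (lam * (ℓ i : ℝ)) :=
              Finset.sum_le_sum fun i hi =>
                mul_le_mul_of_nonneg_right (hα S i hi) (Real.exp_pos _).le
          _ = α * ∑ i ∈ S, Real.exp (lam * (ℓ i : ℝ)) := by rw [Finset.mul_sum]
          _ ≤ α * Z := mul_le_mul_of_nonneg_left
              (Finset.sum_le_sum_of_subset_of_nonneg (Finset.subset_univ S)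
                (fun i _ _ => (Real.exp_pos _).le)) hα0
      have hZne : Z ≠ 0 := hZ0.ne'
      have hlamne : lam ≠ 0 := hlam.ne'
      have h2 : ∑ i ∈ S, phi v S i *
          ((Real.exp lam - 1) * Real.exp (lam * (ℓ i : ℝ)) / (lam * Z))
          = (∑ i ∈ S, phi v S i * Real.exp (lam * (ℓ i : ℝ)))
            * ((Real.exp lam - 1) / (lam * Z)) := by
        rw [Finset.sum_mul]
        apply Finset.sum_congr rfl
        intro i _
        ring
      rw [h2, hc]
      have hfrac : (0:ℝ) ≤ (Real.exp lam - 1) / (lam * Z) :=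
        div_nonneg (by linarith) (by positivity)
      calc (∑ i ∈ S, phi v S i * Real.exp (lam * (ℓ i : ℝ)))
            * ((Real.exp lam - 1) / (lam * Z))
          ≤ (α * Z) * ((Real.exp lam - 1) / (lam * Z)) :=
            mul_le_mul_of_nonneg_right h1 hfrac
        _ = α * (Real.exp lam - 1) / lam := by
            field_simp
    have ha : phi0 v S * dpVal v Finset.univ t ℓ ≤ phi0 v S * (Φ + t * c) :=
      mul_le_mul_of_nonneg_left (ih ℓ) (phi0_nonneg v hv S)
    have hb : ∑ i ∈ S, phi v S i * dpVal v Finset.univ t (Function.update ℓ i (ℓ i + 1))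
        ≤ (∑ i ∈ S, phi v S i) * (Φ + t * c) + c := by
      calc ∑ i ∈ S, phi v S i * dpVal v Finset.univ t (Function.update ℓ i (ℓ i + 1))
          ≤ ∑ i ∈ S, (phi v S i * (Φ + t * c) + phi v S i *
              ((Real.exp lam - 1) * Real.exp (lam * (ℓ i : ℝ)) / (lam * Z))) := by
            apply Finset.sum_le_sum
            intro i hi
            have := mul_le_mul_of_nonneg_left (hkey i hi) (phi_nonneg v hv S i)
            rw [mul_add] at this
            exact this
        _ = (∑ i ∈ S, phi v S i) * (Φ + t * c) + ∑ i ∈ S, phi v S i *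
              ((Real.exp lam - 1) * Real.exp (lam * (ℓ i : ℝ)) / (lam * Z)) := by
            rw [Finset.sum_add_distrib, Finset.sum_mul]
        _ ≤ (∑ i ∈ S, phi v S i) * (Φ + t * c) + c := by linarith
    have hcomb : phi0 v S * (Φ + t * c) + (∑ i ∈ S, phi v S i) * (Φ + t * c)
        = Φ + t * c := by
      rw [← add_mul, phi0_add_sum_phi v hv S, one_mul]
    push_cast
    linarith

/-- High-weight regime: if `T·α ≥ 12·ln(nT)/ε³` or `v_max ≥ 1/ε`, where
`α = v_max/(1+v_max)`, then the static policy offering only the heaviest product — whose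
expected maximum load equals `T·α` — is a `(1-ε)`-approximation to the optimal dynamic
policy. -/
theorem heaviest_product_near_optimal_high_weight
    (n T : ℕ) (hn : 2 ≤ n) (hT : 2 ≤ T) (ε : ℝ) (hε0 : 0 < ε) (hε1 : ε < 1)
    (v : Fin n → ℝ) (hv : ∀ i, 0 < v i)
    (vmax : ℝ)
    (hvmax : vmax = Finset.univ.sup' ⟨⟨0, by omega⟩, Finset.mem_univ _⟩ v)
    (hcase : (T : ℝ) * (vmax / (1 + vmax)) ≥ 12 * Real.log ((n : ℝ) * (T : ℝ)) / ε ^ 3 ∨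
      vmax ≥ 1 / ε) :
    (T : ℝ) * (vmax / (1 + vmax)) ≥ (1 - ε) * dpOpt v Finset.univ T := by
  have hnpos : 0 < n := by omega
  have hvle : ∀ i, v i ≤ vmax := by
    intro i; rw [hvmax]; exact Finset.le_sup' v (Finset.mem_univ i)
  have hvpos : 0 < vmax := lt_of_lt_of_le (hv ⟨0, by omega⟩) (hvle _)
  have h1v : (0:ℝ) < 1 + vmax := by linarith
  set α : ℝ := vmax / (1 + vmax) with hαdef
  have hα0 : 0 ≤ α := by positivity
  have hαb : ∀ S : Finset (Fin n), ∀ i ∈ S, phi v S i ≤ α := by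
    intro S i hi
    have hvi : v i ≤ ∑ j ∈ S, v j := Finset.single_le_sum (fun j _ => (hv j).le) hi
    have hpos := vS_pos v hv S
    rw [phi, hαdef, div_le_div_iff₀ hpos h1v]
    nlinarith [hvle i, hv i, mul_nonneg (sub_nonneg.mpr hvi) hvpos.le]
  have hT0 : (0:ℝ) < T := by exact_mod_cast (by omega : 0 < T)
  have hTα0 : 0 ≤ (T:ℝ) * α := mul_nonneg hT0.le hα0
  rw [ge_iff_le]
  rcases hcase with hcase | hcase
  · -- log regime
    set O : ℝ := dpOpt v Finset.univ T with hO
    set L : ℝ := Real.log n with hL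
    set K : ℝ := Real.log ((n:ℝ) * T) with hK
    have hOb : O ≤ L / ε + (T:ℝ) * (α * (Real.exp ε - 1) / ε) := by
      have h := dpVal_le_potential hnpos v hv ε α hε0 hα0 hαb T (fun _ => 0)
      have hZn : (∑ j : Fin n, Real.exp (ε * (((fun _ => (0:ℕ)) j : ℕ) : ℝ))) = (n:ℝ) := by
        simp
      rw [hZn] at h
      exact h
    have hexp : Real.exp ε ≤ 1 + ε + ε ^ 2 := by
      have h := Real.exp_bound (x := ε) (by rw [abs_of_pos hε0]; linarith)
        (n := 2) (by norm_num)
      have hsum : ∑ m ∈ Finset.range 2, ε ^ m / (m.factorial : ℝ) = 1 + ε := by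
        simp [Finset.sum_range_succ]
      rw [hsum, abs_of_pos hε0] at h
      norm_num at h
      have := abs_le.mp h
      nlinarith [this.2, sq_nonneg ε]
    have hOb2 : O ≤ L / ε + (T:ℝ) * α * (1 + ε) := by
      have hfrac : (Real.exp ε - 1) / ε ≤ 1 + ε := by
        rw [div_le_iff₀ hε0]; nlinarith
      have : (T:ℝ) * (α * (Real.exp ε - 1) / ε) ≤ (T:ℝ) * α * (1 + ε) := by
        calc (T:ℝ) * (α * (Real.exp ε - 1) / ε)
            = ((T:ℝ) * α) * ((Real.exp ε - 1) / ε) := by ring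
          _ ≤ ((T:ℝ) * α) * (1 + ε) := mul_le_mul_of_nonneg_left hfrac hTα0
          _ = (T:ℝ) * α * (1 + ε) := by ring
      linarith
    have hOe : ε * O ≤ L + ε * ((T:ℝ) * α) * (1 + ε) := by
      have := mul_le_mul_of_nonneg_left hOb2 hε0.le
      have hcanc : ε * (L / ε) = L := by field_simp
      calc ε * O ≤ ε * (L / ε + (T:ℝ) * α * (1 + ε)) := this
        _ = L + ε * ((T:ℝ) * α) * (1 + ε) := by rw [mul_add, hcanc]; ring
    have hL0 : 0 ≤ L := Real.log_nonneg (by exact_mod_cast (by omega : 1 ≤ n))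
    have hKL : L ≤ K := by
      apply Real.log_le_log (by positivity)
      have h1T : (1:ℝ) ≤ T := by exact_mod_cast (by omega : 1 ≤ T)
      have hn0 : (0:ℝ) ≤ n := by positivity
      have := mul_le_mul_of_nonneg_left h1T hn0
      linarith
    have hAe : 12 * K ≤ ε ^ 3 * ((T:ℝ) * α) := by
      rw [ge_iff_le, div_le_iff₀ (by positivity)] at hcase
      nlinarith [hcase]
    have hfin : ε * ((1 - ε) * O) ≤ ε * ((T:ℝ) * α) := by
      nlinarith [mul_le_mul_of_nonneg_left hOe (by linarith : (0:ℝ) ≤ 1 - ε),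
        hAe, hKL, hL0, mul_nonneg hε0.le hL0]
    exact le_of_mul_le_mul_left hfin hε0
  · -- high vmax regime
    have hOle : dpOpt v Finset.univ T ≤ (T:ℝ) := by
      have h := dpVal_le_sup_add v hv T (fun _ => 0)
      have hsup : Finset.univ.sup (fun _ : Fin n => (0:ℕ)) = 0 :=
        Nat.le_zero.mp (Finset.sup_le fun _ _ => le_refl 0)
      rw [dpOpt]
      rw [hsup] at h
      simpa using h
    have hαge : 1 - ε ≤ α := by
      rw [hαdef, le_div_iff₀ h1v]
      rw [ge_iff_le, div_le_iff₀ hε0] at hcase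
      nlinarith
    calc (1 - ε) * dpOpt v Finset.univ T ≤ (1 - ε) * (T:ℝ) :=
          mul_le_mul_of_nonneg_left hOle (by linarith)
      _ ≤ (T:ℝ) * α := by
          have := mul_le_mul_of_nonneg_left hαge hT0.le
          linarith
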